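/- Let F be a field, Γ an additive abelian group, ε a skew-symmetric bicharacter of Γ, A a Γ-graded associative unital ε-commutative F-algebra, and D a set of homogeneous color derivations of A such that A is graded D-simple. Let E = {w ∈ A : ∂(w) = 0 for all ∂ ∈ D}. Then E is a Γ-graded unital subalgebra of A, every nonzero homogeneous element of E is a unit of A whose inverse again lies in E, and E₀ = E ∩ A₀ is a field (a field extension of F). -/

import Mathlib

/-- `d` is a homogeneous color derivation of degree `lam` of the `Γ`-graded algebra `A`
(with grading `𝒜`) relative to the bicharacter `ε`. -/
def IsHomColorDer {F : Type*} [Field F] {Γ : Type*} [AddCommGroup Γ]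
    {A : Type*} [Ring A] [Algebra F A]
    (ε : Γ → Γ → F) (𝒜 : Γ → Submodule F A) (lam : Γ) (d : Module.End F A) : Prop :=
  (∀ μ : Γ, ∀ a ∈ 𝒜 μ, d a ∈ 𝒜 (lam + μ)) ∧
  (∀ (l m : Γ) (a b : A), a ∈ 𝒜 l → b ∈ 𝒜 m →
    d (a * b) = d a * b + ε lam l • (a * d b))

/-- `A` is graded `D`-simple: the only `Γ`-graded two-sided ideals of `A` stable under
all derivations in `D` are `0` and `A`. -/
def IsGradedDSimple {F : Type*} [Field F] {Γ : Type*} [AddCommGroup Γ] [DecidableEq Γ]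
    {A : Type*} [Ring A] [Algebra F A]
    (𝒜 : Γ → Submodule F A) [GradedAlgebra 𝒜] (D : Set (Module.End F A)) : Prop :=
  ∀ I : Submodule F A,
    (∀ (a x : A), x ∈ I → a * x ∈ I ∧ x * a ∈ I) →
    (∀ x ∈ I, ∀ γ : Γ, (DirectSum.decompose 𝒜 x γ : A) ∈ I) →
    (∀ d ∈ D, ∀ x ∈ I, d x ∈ I) →
    I = ⊥ ∨ I = ⊤

/-- For a graded `D`-simple `ε`-commutative `Γ`-graded unital algebra
`A`, the set `E = {w | ∂(w) = 0 ∀ ∂ ∈ D}` of `D`-constants is a `Γ`-graded unital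
subalgebra of `A`, every nonzero homogeneous element of `E` is a unit of `A` with
inverse in `E`, and `E₀ = E ∩ A₀` is a field (a field extension of `F`). -/
theorem constants_graded_field
    {F : Type*} [Field F] {Γ : Type*} [AddCommGroup Γ] [DecidableEq Γ]
    {A : Type*} [Ring A] [Algebra F A] [Nontrivial A]
    (ε : Γ → Γ → F)
    (hskew : ∀ l m : Γ, ε l m * ε m l = 1)
    (hmul : ∀ l m n : Γ, ε l (m + n) = ε l m * ε l n)
    (𝒜 : Γ → Submodule F A) [GradedAlgebra 𝒜]
    (hcomm : ∀ (l m : Γ) (a b : A), a ∈ 𝒜 l → b ∈ 𝒜 m → a * b = ε l m • (b * a))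
    (D : Set (Module.End F A)) (deg : Module.End F A → Γ)
    (hD : ∀ d ∈ D, IsHomColorDer ε 𝒜 (deg d) d)
    (hsimple : IsGradedDSimple 𝒜 D) :
    (∃ S : Subalgebra F A, (S : Set A) = {w : A | ∀ d ∈ D, d w = 0}) ∧
    (∀ w : A, (∀ d ∈ D, d w = 0) → ∀ γ : Γ,
      ∀ d ∈ D, d (DirectSum.decompose 𝒜 w γ : A) = 0) ∧
    (∀ (γ : Γ) (w : A), (∀ d ∈ D, d w = 0) → w ∈ 𝒜 γ → w ≠ 0 →
      ∃ v : A, (∀ d ∈ D, d v = 0) ∧ w * v = 1 ∧ v * w = 1) ∧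
    (∃ S₀ : Subalgebra F A,
      (S₀ : Set A) = {w : A | (∀ d ∈ D, d w = 0) ∧ w ∈ 𝒜 (0 : Γ)} ∧
      IsField S₀) := by
  classical
  -- ε(l, 0) = 1
  have heps0 : ∀ l : Γ, ε l 0 = 1 := by
    intro l
    have hne : ε l 0 ≠ 0 := left_ne_zero_of_mul_eq_one (hskew l 0)
    have h := hmul l 0 0
    rw [add_zero] at h
    exact (mul_left_cancel₀ hne (by rw [mul_one]; exact h)).symm
  -- d 1 = 0
  have hd1 : ∀ d ∈ D, d (1 : A) = 0 := by
    intro d hd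
    have h := (hD d hd).2 0 0 1 1 (SetLike.one_mem_graded 𝒜) (SetLike.one_mem_graded 𝒜)
    simp only [mul_one, one_mul, heps0, one_smul] at h
    exact (left_eq_add.mp h)
  -- projection commutes with derivations
  have hprojA : ∀ d ∈ D, ∀ (w : A) (γ : Γ),
      (DirectSum.decompose 𝒜 (d w) (deg d + γ) : A) = d (DirectSum.decompose 𝒜 w γ : A) := by
    intro d hd w γ
    induction w using DirectSum.Decomposition.inductionOn 𝒜 with
    | zero => simp
    | @homogeneous i m =>
        by_cases h : i = γ
        · subst h
          rw [DirectSum.decompose_of_mem_same 𝒜 ((hD d hd).1 i m m.2),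
            DirectSum.decompose_of_mem_same 𝒜 m.2]
        · rw [DirectSum.decompose_of_mem_ne 𝒜 ((hD d hd).1 i m m.2)
            (fun hh => h (add_left_cancel hh)),
            DirectSum.decompose_of_mem_ne 𝒜 m.2 h, map_zero]
    | add a b iha ihb =>
        rw [map_add, DirectSum.decompose_add, DirectSum.add_apply, Submodule.coe_add,
          DirectSum.decompose_add, DirectSum.add_apply, Submodule.coe_add, map_add,
          iha, ihb]
  -- PART 2 : homogeneous components of constants are constants
  have hpart2 : ∀ w : A, (∀ d ∈ D, d w = 0) → ∀ γ : Γ,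
      ∀ d ∈ D, d (DirectSum.decompose 𝒜 w γ : A) = 0 := by
    intro w hw γ d hd
    rw [← hprojA d hd w γ, hw d hd]
    simp
  -- derivations through right multiplication by a homogeneous constant
  have hmulR : ∀ d ∈ D, ∀ (τ : Γ) (u : A), u ∈ 𝒜 τ → d u = 0 →
      ∀ x : A, d (x * u) = d x * u := by
    intro d hd τ u hu hdu x
    induction x using DirectSum.Decomposition.inductionOn 𝒜 with
    | zero => simp
    | @homogeneous i m =>
        rw [(hD d hd).2 i τ m u m.2 hu, hdu, mul_zero, smul_zero, add_zero]
    | add a b iha ihb => rw [add_mul, map_add, iha, ihb, map_add, add_mul]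
  -- PART 3 : nonzero homogeneous constants are invertible with constant inverse
  have hpart3 : ∀ (γ : Γ) (w : A), (∀ d ∈ D, d w = 0) → w ∈ 𝒜 γ → w ≠ 0 →
      ∃ v : A, (∀ d ∈ D, d v = 0) ∧ w * v = 1 ∧ v * w = 1 := by
    intro γ w hw hwγ hw0
    set I : Submodule F A := LinearMap.range (LinearMap.mulRight F w) with hIdef
    have hIr : ∀ (y : A), ∀ a : A, (y * w) * a ∈ I := by
      intro y
      refine DirectSum.Decomposition.inductionOn 𝒜 ?_ ?_ ?_
      · rw [mul_zero]; exact zero_mem I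
      · intro i a
        refine LinearMap.mem_range.mpr ⟨ε γ i • (y * (a : A)), ?_⟩
        rw [LinearMap.mulRight_apply, smul_mul_assoc, mul_assoc y w (a : A),
          hcomm γ i w a hwγ a.2, mul_smul_comm, mul_assoc]
      · intro a b ha hb
        rw [mul_add]; exact add_mem ha hb
    have hI2 : ∀ (a x : A), x ∈ I → a * x ∈ I ∧ x * a ∈ I := by
      intro a x hx
      obtain ⟨y, rfl⟩ := LinearMap.mem_range.mp hx
      constructor
      · exact LinearMap.mem_range.mpr ⟨a * y, by rw [LinearMap.mulRight_apply,
          LinearMap.mulRight_apply, mul_assoc]⟩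
      · exact hIr y a
    have hIg : ∀ x ∈ I, ∀ γ' : Γ, (DirectSum.decompose 𝒜 x γ' : A) ∈ I := by
      intro x hx γ'
      obtain ⟨y, rfl⟩ := LinearMap.mem_range.mp hx
      rw [LinearMap.mulRight_apply]
      have hkey : (DirectSum.decompose 𝒜 (y * w) γ' : A)
          = (DirectSum.decompose 𝒜 y (γ' - γ) : A) * w := by
        conv_lhs => rw [show γ' = (γ' - γ) + γ by abel]
        exact DirectSum.coe_decompose_mul_add_of_right_mem 𝒜 hwγ
      rw [hkey]
      exact LinearMap.mem_range.mpr ⟨_, rfl⟩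
    have hId : ∀ d ∈ D, ∀ x ∈ I, d x ∈ I := by
      intro d hd x hx
      obtain ⟨y, rfl⟩ := LinearMap.mem_range.mp hx
      rw [LinearMap.mulRight_apply, hmulR d hd γ w hwγ (hw d hd) y]
      exact LinearMap.mem_range.mpr ⟨d y, rfl⟩
    rcases hsimple I hI2 hIg hId with hbot | htop
    · exfalso
      apply hw0
      have hwI : w ∈ I := LinearMap.mem_range.mpr ⟨1, one_mul w⟩
      rw [hbot, Submodule.mem_bot] at hwI
      exact hwI
    · have h1 : (1 : A) ∈ I := by rw [htop]; trivial
      obtain ⟨v, hv⟩ := LinearMap.mem_range.mp h1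
      rw [LinearMap.mulRight_apply] at hv
      -- the annihilator ideal
      set L : Submodule F A := LinearMap.ker (LinearMap.mulRight F w) with hLdef
      have hmemL : ∀ x : A, x ∈ L ↔ x * w = 0 := fun x => LinearMap.mem_ker
      have hLr : ∀ x ∈ L, ∀ a : A, x * a ∈ L := by
        intro x hx
        refine DirectSum.Decomposition.inductionOn 𝒜 ?_ ?_ ?_
        · rw [mul_zero]; exact zero_mem L
        · intro i a
          rw [hmemL, mul_assoc, hcomm i γ a w a.2 hwγ, mul_smul_comm, ← mul_assoc,
            (hmemL x).mp hx, zero_mul, smul_zero]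
        · intro a b ha hb
          rw [mul_add]; exact add_mem ha hb
      have hL2 : ∀ (a x : A), x ∈ L → a * x ∈ L ∧ x * a ∈ L := by
        intro a x hx
        refine ⟨?_, hLr x hx a⟩
        rw [hmemL, mul_assoc, (hmemL x).mp hx, mul_zero]
      have hLg : ∀ x ∈ L, ∀ γ' : Γ, (DirectSum.decompose 𝒜 x γ' : A) ∈ L := by
        intro x hx γ'
        rw [hmemL, ← DirectSum.coe_decompose_mul_add_of_right_mem 𝒜 hwγ,
          (hmemL x).mp hx]
        simp
      have hLd : ∀ d ∈ D, ∀ x ∈ L, d x ∈ L := by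
        intro d hd x hx
        rw [hmemL, ← hmulR d hd γ w hwγ (hw d hd) x, (hmemL x).mp hx]
        exact map_zero d
      rcases hsimple L hL2 hLg hLd with hbot | htop'
      · have hwv : w * v = 1 := by
          have hmem : (1 - w * v) ∈ L := by
            rw [hmemL, sub_mul, one_mul, mul_assoc, hv, mul_one, sub_self]
          rw [hbot, Submodule.mem_bot] at hmem
          exact (sub_eq_zero.mp hmem).symm
        have hdv : ∀ d ∈ D, d v = 0 := by
          intro d hd
          have hm : d v ∈ L := by
            rw [hmemL, ← hmulR d hd γ w hwγ (hw d hd) v, hv, hd1 d hd]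
          rwa [hbot, Submodule.mem_bot] at hm
        exact ⟨v, hdv, hwv, hv⟩
      · exfalso
        have h1L : (1 : A) ∈ L := by rw [htop']; trivial
        rw [hmemL, one_mul] at h1L
        exact hw0 h1L
  -- constants are closed under multiplication
  have hSmul : ∀ a b : A, (∀ d ∈ D, d a = 0) → (∀ d ∈ D, d b = 0) →
      ∀ d ∈ D, d (a * b) = 0 := by
    intro a b ha hb d hd
    have hb' := hpart2 b hb
    conv_lhs => rw [← DirectSum.sum_support_decompose 𝒜 b]
    rw [Finset.mul_sum, map_sum]
    refine Finset.sum_eq_zero ?_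
    intro γ' _
    rw [hmulR d hd γ' _ (SetLike.coe_mem _) (hb' γ' d hd) a, ha d hd, zero_mul]
  -- the subalgebra of constants
  let S : Subalgebra F A :=
  { carrier := {w : A | ∀ d ∈ D, d w = 0}
    mul_mem' := fun {a b} ha hb => hSmul a b ha hb
    one_mem' := hd1
    add_mem' := fun {a b} ha hb d hd => by rw [map_add, ha d hd, hb d hd, add_zero]
    zero_mem' := fun d hd => map_zero d
    algebraMap_mem' := fun c d hd => by
      rw [Algebra.algebraMap_eq_smul_one, map_smul, hd1 d hd, smul_zero] }
  -- the degree-0 subalgebra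
  let S0 : Subalgebra F A :=
  { carrier := {w : A | w ∈ 𝒜 (0 : Γ)}
    mul_mem' := fun {a b} ha hb => by
      have := SetLike.mul_mem_graded (A := 𝒜) ha hb
      rwa [zero_add] at this
    one_mem' := SetLike.one_mem_graded 𝒜
    add_mem' := fun {a b} ha hb => Submodule.add_mem (𝒜 (0:Γ)) ha hb
    zero_mem' := zero_mem (𝒜 (0 : Γ))
    algebraMap_mem' := fun c => by
      rw [Algebra.algebraMap_eq_smul_one]
      exact Submodule.smul_mem _ c (SetLike.one_mem_graded 𝒜) }
  refine ⟨⟨S, rfl⟩, hpart2, hpart3, S ⊓ S0, rfl, ?_⟩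
  refine { exists_pair_ne := ⟨0, 1, fun h => ?_⟩, mul_comm := ?_, mul_inv_cancel := ?_ }
  · have h' := congrArg Subtype.val h
    simp only [ZeroMemClass.coe_zero, OneMemClass.coe_one] at h'
    exact zero_ne_one h'
  · intro a b
    obtain ⟨-, ha0⟩ := Algebra.mem_inf.mp a.2
    obtain ⟨-, hb0⟩ := Algebra.mem_inf.mp b.2
    apply Subtype.ext
    rw [MulMemClass.coe_mul, MulMemClass.coe_mul, hcomm 0 0 (a : A) (b : A) ha0 hb0,
      heps0 0, one_smul]
  · intro a ha
    have ha1 : (a : A) ≠ 0 := fun h => ha (Subtype.ext h)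
    obtain ⟨haS, haS0⟩ := Algebra.mem_inf.mp a.2
    obtain ⟨v, hdv, hwv, hvw⟩ := hpart3 0 (a : A) haS haS0 ha1
    have hwv0 : (a : A) * (DirectSum.decompose 𝒜 v 0 : A) = 1 := by
      have hkey : (DirectSum.decompose 𝒜 ((a : A) * v) ((0 : Γ) + 0) : A)
          = (a : A) * (DirectSum.decompose 𝒜 v 0 : A) :=
        DirectSum.coe_decompose_mul_add_of_left_mem 𝒜 haS0
      rw [zero_add] at hkey
      rw [← hkey, hwv, DirectSum.decompose_of_mem_same 𝒜 (SetLike.one_mem_graded 𝒜)]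
    have hveq : v = (DirectSum.decompose 𝒜 v 0 : A) := by
      calc v = v * ((a : A) * (DirectSum.decompose 𝒜 v 0 : A)) := by rw [hwv0, mul_one]
        _ = (v * (a : A)) * (DirectSum.decompose 𝒜 v 0 : A) := by rw [mul_assoc]
        _ = (DirectSum.decompose 𝒜 v 0 : A) := by rw [hvw, one_mul]
    refine ⟨⟨v, Algebra.mem_inf.mpr ⟨hdv, ?_⟩⟩, Subtype.ext ?_⟩
    · show v ∈ 𝒜 (0 : Γ)
      rw [hveq]
      exact SetLike.coe_mem _
    · rw [MulMemClass.coe_mul, OneMemClass.coe_one]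
      exact hwv
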